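/- With the single-parameter, N=1 setup, the (1,1) entry of Â₀ := O·A₀·R equals -(μ₀·H₀(μ₀) - λ₀·H₀(λ₀))/(μ₀ - λ₀), where H₀(s) := CΦ(s)B and O, R are the generalized observability/controllability matrices with rows CΦ(μ₀), CΦ(μ₀)A₁Φ(μ₁) and columns Φ(λ₀)B, Φ(λ₁)A₁Φ(λ₀)B. -/

import Mathlib

open Matrix

/-- The resolvent `Φ(z) = (zI - A₀)⁻¹`. -/
noncomputable def Phi {n : ℕ} (A₀ : Matrix (Fin n) (Fin n) ℂ) (z : ℂ) :
    Matrix (Fin n) (Fin n) ℂ :=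
  (z • (1 : Matrix (Fin n) (Fin n) ℂ) - A₀)⁻¹

theorem stmt_5 {n : ℕ} (A₀ A₁ : Matrix (Fin n) (Fin n) ℂ)
    (C : Matrix (Fin 1) (Fin n) ℂ) (B : Matrix (Fin n) (Fin 1) ℂ)
    (μ₀ μ₁ l₀ l₁ : ℂ)
    (hμ₀ : IsUnit (μ₀ • (1 : Matrix (Fin n) (Fin n) ℂ) - A₀))
    (hμ₁ : IsUnit (μ₁ • (1 : Matrix (Fin n) (Fin n) ℂ) - A₀))
    (hl₀ : IsUnit (l₀ • (1 : Matrix (Fin n) (Fin n) ℂ) - A₀))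
    (hl₁ : IsUnit (l₁ • (1 : Matrix (Fin n) (Fin n) ℂ) - A₀))
    (O : Matrix (Fin 2) (Fin n) ℂ) (R : Matrix (Fin n) (Fin 2) ℂ)
    (hO0 : ∀ j, O 0 j = (C * Phi A₀ μ₀) 0 j)
    (hO1 : ∀ j, O 1 j = (C * Phi A₀ μ₀ * A₁ * Phi A₀ μ₁) 0 j)
    (hR0 : ∀ i, R i 0 = (Phi A₀ l₀ * B) i 0)
    (hR1 : ∀ i, R i 1 = (Phi A₀ l₁ * A₁ * Phi A₀ l₀ * B) i 0)
    (hne : μ₀ ≠ l₀) :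
    (O * A₀ * R) 0 0 =
      -((μ₀ * (C * Phi A₀ μ₀ * B) 0 0 - l₀ * (C * Phi A₀ l₀ * B) 0 0) /
        (μ₀ - l₀)) := by
  set M : Matrix (Fin n) (Fin n) ℂ := μ₀ • (1 : Matrix (Fin n) (Fin n) ℂ) - A₀
  set L : Matrix (Fin n) (Fin n) ℂ := l₀ • (1 : Matrix (Fin n) (Fin n) ℂ) - A₀
  have hMd : IsUnit M.det := (Matrix.isUnit_iff_isUnit_det M).mp hμ₀
  have hLd : IsUnit L.det := (Matrix.isUnit_iff_isUnit_det L).mp hl₀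
  have hΦμ : Phi A₀ μ₀ = M⁻¹ := rfl
  have hΦl : Phi A₀ l₀ = L⁻¹ := rfl
  -- Φμ * A₀ = μ₀ • Φμ - 1
  have h1 : Phi A₀ μ₀ * A₀ = μ₀ • Phi A₀ μ₀ - 1 := by
    have hA : A₀ = μ₀ • (1 : Matrix (Fin n) (Fin n) ℂ) - M := by simp [M]
    rw [hΦμ, hA]
    rw [Matrix.mul_sub, Matrix.nonsing_inv_mul M hMd, Matrix.mul_smul, Matrix.mul_one]
  -- A₀ * Φl = l₀ • Φl - 1
  have h2 : A₀ * Phi A₀ l₀ = l₀ • Phi A₀ l₀ - 1 := by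
    have hA : A₀ = l₀ • (1 : Matrix (Fin n) (Fin n) ℂ) - L := by simp [L]
    rw [hΦl, hA]
    rw [Matrix.sub_mul, Matrix.mul_nonsing_inv L hLd, Matrix.smul_mul, Matrix.one_mul]
  -- resolvent identity
  have hres : (μ₀ - l₀) • (Phi A₀ μ₀ * Phi A₀ l₀) = Phi A₀ l₀ - Phi A₀ μ₀ := by
    have e1 : Phi A₀ μ₀ * A₀ * Phi A₀ l₀
        = μ₀ • (Phi A₀ μ₀ * Phi A₀ l₀) - Phi A₀ l₀ := by
      rw [h1, Matrix.sub_mul, Matrix.smul_mul, Matrix.one_mul]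
    have e2 : Phi A₀ μ₀ * A₀ * Phi A₀ l₀
        = l₀ • (Phi A₀ μ₀ * Phi A₀ l₀) - Phi A₀ μ₀ := by
      rw [Matrix.mul_assoc, h2, Matrix.mul_sub, Matrix.mul_smul, Matrix.mul_one]
    have := e1.symm.trans e2
    rw [sub_smul]
    abel_nf
    abel_nf at this
    linear_combination (norm := abel) this
  -- key identity
  have key : (μ₀ - l₀) • (Phi A₀ μ₀ * A₀ * Phi A₀ l₀)
      = l₀ • Phi A₀ l₀ - μ₀ • Phi A₀ μ₀ := by
    rw [Matrix.mul_assoc, h2, Matrix.mul_sub, Matrix.mul_smul, Matrix.mul_one,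
      smul_sub, smul_smul, mul_comm, ← smul_smul, hres, smul_sub, sub_smul]
    abel
  -- entry computation
  have hentry : (O * A₀ * R) 0 0
      = (C * Phi A₀ μ₀ * A₀ * (Phi A₀ l₀ * B)) 0 0 := by
    rw [Matrix.mul_apply, Matrix.mul_apply]
    refine Finset.sum_congr rfl fun k _ => ?_
    rw [hR0]
    congr 1
    rw [Matrix.mul_apply, Matrix.mul_apply]
    exact Finset.sum_congr rfl fun j _ => by rw [hO0]
  rw [hentry]
  have hrw : C * Phi A₀ μ₀ * A₀ * (Phi A₀ l₀ * B)
      = C * (Phi A₀ μ₀ * A₀ * Phi A₀ l₀) * B := by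
    simp only [Matrix.mul_assoc]
  rw [hrw]
  have hmid : Phi A₀ μ₀ * A₀ * Phi A₀ l₀
      = (μ₀ - l₀)⁻¹ • (l₀ • Phi A₀ l₀ - μ₀ • Phi A₀ μ₀) := by
    rw [← key, smul_smul, inv_mul_cancel₀ (sub_ne_zero.mpr hne), one_smul]
  rw [hmid]
  have hsub : μ₀ - l₀ ≠ 0 := sub_ne_zero.mpr hne
  simp only [Matrix.mul_smul, Matrix.smul_mul, Matrix.mul_sub, Matrix.sub_mul,
    Matrix.smul_apply, Matrix.sub_apply, smul_eq_mul]
  field_simp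
  ring
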